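/- arXiv:1807.02335 — 3 statements merged into one kernel-verified Lean document; each statement's English description precedes it below -/
import Mathlib

section
/- Let P ⊆ Δ be a subset satisfying: (i) P ∪ (−P) = Δ, (ii) P ∩ (−P) = ∅, and (iii) whenever α, β ∈ P and α + β ∈ Δ, also α + β ∈ P (i.e., Δ = P ⊔ (−P) is a triangular decomposition with positive part P). Then there exists a unique strict total order ≺ on ℕ such that P = {ε_i − ε_j : i, j ∈ ℕ, i ≺ j}. Conversely, for every strict total order ≺ on ℕ the set {ε_i − ε_j : i ≺ j} satisfies (i), (ii), (iii). -/
open Pointwise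

/-- `ε i = Finsupp.single i 1` in `ℕ →₀ ℤ`. -/
noncomputable def eps (i : ℕ) : ℕ →₀ ℤ := Finsupp.single i 1

/-- The root system `Δ = {ε_i - ε_j : i ≠ j}` of `sl(∞)`. -/
def Delta : Set (ℕ →₀ ℤ) := {x | ∃ i j : ℕ, i ≠ j ∧ x = eps i - eps j}

/-- The positive roots attached to a strict order `r` on `ℕ`. -/
def posRoots (r : ℕ → ℕ → Prop) : Set (ℕ →₀ ℤ) :=
  {x | ∃ i j : ℕ, r i j ∧ x = eps i - eps j}

lemma eps_sub_apply (i j a : ℕ) :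
    (eps i - eps j) a = (if i = a then 1 else 0) - (if j = a then 1 else 0) := by
  simp [eps, Finsupp.single_apply]

lemma pair_inj {i j k l : ℕ} (hij : i ≠ j)
    (h : eps i - eps j = eps k - eps l) : i = k ∧ j = l := by
  have hi := DFunLike.congr_fun h i
  have hj := DFunLike.congr_fun h j
  rw [eps_sub_apply, eps_sub_apply] at hi hj
  split_ifs at hi hj <;> omega

lemma zero_ne_pair {k l : ℕ} (hkl : k ≠ l) : (0 : ℕ →₀ ℤ) ≠ eps k - eps l := by
  intro h
  have := DFunLike.congr_fun h k
  rw [eps_sub_apply] at this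
  simp only [Finsupp.coe_zero, Pi.zero_apply] at this
  split_ifs at this <;> omega

lemma sum_ne {i j k l m n : ℕ} (hjk : j ≠ k) (hil : i ≠ l) (hij : i ≠ j) (hkl : k ≠ l)
    (hmn : m ≠ n) : eps i - eps j + (eps k - eps l) ≠ eps m - eps n := by
  intro h
  have hi := DFunLike.congr_fun h i
  have hk := DFunLike.congr_fun h k
  simp only [Finsupp.add_apply, eps_sub_apply] at hi hk
  by_cases hik : i = k
  · subst hik; split_ifs at hk <;> omega
  · split_ifs at hi hk <;> omega

lemma neg_pair (i j : ℕ) : -(eps i - eps j) = eps j - eps i := by abel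

lemma sum_pair (i j k : ℕ) : eps i - eps j + (eps j - eps k) = eps i - eps k := by abel

theorem stmt0 :
    (∀ P : Set (ℕ →₀ ℤ),
      P ∪ -P = Delta →
      P ∩ -P = ∅ →
      (∀ α β, α ∈ P → β ∈ P → α + β ∈ Delta → α + β ∈ P) →
      ∃! r : ℕ → ℕ → Prop, IsStrictTotalOrder ℕ r ∧ P = posRoots r) ∧
    (∀ r : ℕ → ℕ → Prop, IsStrictTotalOrder ℕ r →
      posRoots r ∪ -(posRoots r) = Delta ∧
      posRoots r ∩ -(posRoots r) = ∅ ∧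
      (∀ α β, α ∈ posRoots r → β ∈ posRoots r → α + β ∈ Delta → α + β ∈ posRoots r)) := by
  constructor
  · intro P hU hI hC
    have hPD : P ⊆ Delta := hU ▸ Set.subset_union_left
    -- the candidate order
    set r : ℕ → ℕ → Prop := fun i j => eps i - eps j ∈ P with hr
    have hne : ∀ {i j : ℕ}, eps i - eps j ∈ P → i ≠ j := by
      intro i j h hij
      subst hij
      simp only [sub_self] at h
      obtain ⟨k, l, hkl, h0⟩ := hPD h
      exact zero_ne_pair hkl h0
    have hnot : ∀ {i j : ℕ}, r i j → ¬ r j i := by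
      intro i j hij hji
      have : eps i - eps j ∈ P ∩ -P := by
        refine ⟨hij, ?_⟩
        rw [Set.mem_neg, neg_pair]
        exact hji
      rw [hI] at this
      exact this
    have hsto : IsStrictTotalOrder ℕ r := by
      refine { trichotomous := ?_, irrefl := ?_, trans := ?_ }
      · intro i j
        by_cases hij : i = j
        · exact fun _ _ => hij
        · have : eps i - eps j ∈ Delta := ⟨i, j, hij, rfl⟩
          rw [← hU] at this
          rcases this with h | h
          · exact fun h' => absurd h h'
          · rw [Set.mem_neg, neg_pair] at h
            exact fun _ h' => absurd h h'
      · intro i h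
        exact hne h rfl
      · intro i j k hij hjk
        by_cases hik : i = k
        · subst hik
          exact absurd hjk (hnot hij)
        · have := hC _ _ hij hjk (by rw [sum_pair]; exact ⟨i, k, hik, rfl⟩)
          rwa [sum_pair] at this
    refine ⟨r, ⟨hsto, ?_⟩, ?_⟩
    · ext x
      constructor
      · intro hx
        obtain ⟨i, j, hij, hx'⟩ := hPD hx
        exact ⟨i, j, show eps i - eps j ∈ P from hx' ▸ hx, hx'⟩
      · rintro ⟨i, j, hij, rfl⟩
        exact hij
    · rintro r' ⟨hsto', hP⟩
      funext i j
      apply propext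
      constructor
      · intro hij
        show eps i - eps j ∈ P
        rw [hP]
        exact ⟨i, j, hij, rfl⟩
      · intro hij
        have hij' : eps i - eps j ∈ posRoots r' := hP ▸ hij
        obtain ⟨k, l, hkl, heq⟩ := hij'
        have hkl' : k ≠ l := fun h => hsto'.irrefl k (h ▸ hkl)
        have hne' : i ≠ j := by
          intro h
          subst h
          rw [sub_self] at heq
          exact zero_ne_pair hkl' heq
        obtain ⟨hik, hjl⟩ := pair_inj hne' heq
        subst hik; subst hjl
        exact hkl
  · intro r hsto
    have hne : ∀ {i j : ℕ}, r i j → i ≠ j := by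
      intro i j h hij
      exact hsto.irrefl i (hij ▸ h)
    have hasymm : ∀ {i j : ℕ}, r i j → ¬ r j i := by
      intro i j hij hji
      exact hsto.irrefl i (hsto.trans _ _ _ hij hji)
    refine ⟨?_, ?_, ?_⟩
    · ext x
      constructor
      · rintro (⟨i, j, hij, rfl⟩ | hx)
        · exact ⟨i, j, hne hij, rfl⟩
        · rw [Set.mem_neg] at hx
          obtain ⟨i, j, hij, hx'⟩ := hx
          refine ⟨j, i, (hne hij).symm, ?_⟩
          rw [← neg_pair, ← hx', neg_neg]
      · rintro ⟨i, j, hij, rfl⟩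
        rcases (by have := hsto.trichotomous i j; tauto : r i j ∨ i = j ∨ r j i) with h | h | h
        · exact Or.inl ⟨i, j, h, rfl⟩
        · exact absurd h hij
        · refine Or.inr ?_
          rw [Set.mem_neg, neg_pair]
          exact ⟨j, i, h, rfl⟩
    · ext x
      simp only [Set.mem_inter_iff, Set.mem_neg, Set.mem_empty_iff_false, iff_false]
      rintro ⟨⟨i, j, hij, rfl⟩, hx⟩
      obtain ⟨k, l, hkl, hx'⟩ := hx
      rw [show -(eps i - eps j) = eps j - eps i from neg_pair i j] at hx'
      obtain ⟨hjk, hil⟩ := pair_inj (Ne.symm (hne hij)) hx'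
      subst hjk; subst hil
      exact hasymm hij hkl
    · rintro α β ⟨i, j, hij, rfl⟩ ⟨k, l, hkl, rfl⟩ hD
      by_cases hjk : j = k
      · subst hjk
        by_cases hil : i = l
        · subst hil
          rw [sum_pair] at hD
          obtain ⟨m, n, hmn, h0⟩ := hD
          exact absurd (sub_self (eps i) ▸ h0) (zero_ne_pair hmn)
        · rw [sum_pair]
          exact ⟨i, l, hsto.trans _ _ _ hij hkl, rfl⟩
      · by_cases hil : i = l
        · subst hil
          have hkey : eps i - eps j + (eps k - eps i) = eps k - eps j := by abel
          rw [hkey]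
          exact ⟨k, j, hsto.trans _ _ _ hkl hij, rfl⟩
        · obtain ⟨m, n, hmn, h0⟩ := hD
          exact absurd h0 (sum_ne hjk hil (hne hij) (hne hkl) hmn)
end

section
/- Let ≺ be a strict total order on ℕ. Then every positive root ε_i − ε_j with i ≺ j lies in the additive submonoid of (ℕ →₀ ℤ) generated by the simple roots if and only if for all i ≺ j the closed interval {k ∈ ℕ : i ≼ k ≼ j} is finite. -/
/-- The simple roots attached to a strict order `r` on `ℕ`: the `ε_a - ε_b` with
`a ≺ b` and no `c` strictly between `a` and `b`. -/
def simpleRoots (r : ℕ → ℕ → Prop) : Set (ℕ →₀ ℤ) :=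
  {x | ∃ a b : ℕ, r a b ∧ (¬ ∃ c : ℕ, r a c ∧ r c b) ∧ x = eps a - eps b}

lemma eps_apply_self (i : ℕ) : eps i i = 1 := by simp [eps]

lemma eps_apply_ne {i k : ℕ} (h : i ≠ k) : eps i k = 0 := by
  simp [eps, Finsupp.single_apply_eq_zero, h]

lemma list_sum_nonpos : ∀ (l : List ℤ), (∀ x ∈ l, x ≤ 0) → l.sum ≤ 0
  | [], _ => le_refl 0
  | a :: l, h => by
      simp only [List.sum_cons]
      have h1 := h a List.mem_cons_self
      have h2 := list_sum_nonpos l (fun x hx => h x (List.mem_cons_of_mem a hx))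
      omega

lemma key_forward (r : ℕ → ℕ → Prop) (hr : IsStrictTotalOrder ℕ r) :
    ∀ n (l : List (ℕ →₀ ℤ)), l.length = n → (∀ x ∈ l, x ∈ simpleRoots r) →
    ∀ i j : ℕ, i ≠ j → l.sum = eps i - eps j →
    {k : ℕ | (i = k ∨ r i k) ∧ (k = j ∨ r k j)}.Finite := by
  intro n
  induction n using Nat.strong_induction_on with
  | _ n ih =>
    intro l hlen hmem i j hne hsum
    -- find an edge with source i
    have hsrc : ∃ x ∈ l, ∃ b, r i b ∧ (¬ ∃ c, r i c ∧ r c b) ∧ x = eps i - eps b := by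
      by_contra hno
      push_neg at hno
      have hle : ∀ x ∈ l, x i ≤ 0 := by
        intro x hx
        obtain ⟨a, b, hab, hcov, rfl⟩ := hmem x hx
        have hai : a ≠ i := by
          rintro rfl
          exact hno _ hx b hab (fun c h1 h2 => hcov ⟨c, h1, h2⟩) rfl
        have : (eps a - eps b) i = - eps b i := by
          simp [Finsupp.sub_apply, eps_apply_ne hai]
        rw [this]
        rcases eq_or_ne b i with rfl | hbi
        · simp [eps_apply_self]
        · simp [eps_apply_ne hbi]
      have h1 : l.sum i = 1 := by
        rw [hsum]
        simp [Finsupp.sub_apply, eps_apply_self, eps_apply_ne (Ne.symm hne)]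
      have h2 : l.sum i ≤ 0 := by
        have heq : l.sum i = (l.map (fun x => x i)).sum := by
          have := map_list_sum (Finsupp.applyAddHom i) l
          exact this
        rw [heq]
        apply list_sum_nonpos
        intro z hz
        obtain ⟨x, hx, rfl⟩ := List.mem_map.mp hz
        exact hle x hx
      omega
    obtain ⟨x, hxl, b, hib, hcov, rfl⟩ := hsrc
    obtain ⟨l₁, l₂, rfl⟩ := List.append_of_mem hxl
    have hrsum : (l₁ ++ l₂).sum = eps b - eps j := by
      have h1 : (l₁ ++ l₂).sum = (eps i - eps j) - (eps i - eps b) := by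
        rw [← hsum]
        simp [List.sum_append]
        abel
      rw [h1]; abel
    have hlenlt : (l₁ ++ l₂).length < n := by
      rw [← hlen]
      simp [List.length_append]
    rcases eq_or_ne b j with heq | hbj
    · subst heq
      apply Set.Finite.subset ((Set.finite_singleton b).insert i)
      rintro k ⟨hik, hkj⟩
      simp only [Set.mem_insert_iff, Set.mem_singleton_iff]
      rcases hik with rfl | hik
      · exact Or.inl rfl
      rcases hkj with rfl | hkj
      · exact Or.inr rfl
      exact absurd ⟨k, hik, hkj⟩ hcov
    · have hfin := ih _ hlenlt (l₁ ++ l₂) rfl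
        (fun x hx => hmem x (by simp at hx ⊢; tauto)) b j hbj hrsum
      apply Set.Finite.subset ((hfin.insert i).insert j)
      rintro k ⟨hik, hkj⟩
      simp only [Set.mem_insert_iff, Set.mem_setOf_eq]
      rcases hkj with rfl | hkj
      · exact Or.inl rfl
      rcases hik with rfl | hik
      · exact Or.inr (Or.inl rfl)
      -- k ≠ i, k ≠ j, r i k, r k j
      right; right
      rcases (show r k b ∨ k = b ∨ r b k by
        by_contra hc; push_neg at hc; exact hc.2.1 (hr.trichotomous k b hc.1 hc.2.2)) with hkb | rfl | hbk
      · exact absurd ⟨k, hik, hkb⟩ hcov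
      · exact ⟨Or.inl rfl, Or.inr hkj⟩
      · exact ⟨Or.inr hbk, Or.inr hkj⟩

lemma key_backward (r : ℕ → ℕ → Prop) (hr : IsStrictTotalOrder ℕ r)
    (hfin : ∀ i j : ℕ, r i j → {k : ℕ | (i = k ∨ r i k) ∧ (k = j ∨ r k j)}.Finite) :
    ∀ n i j, r i j → {k : ℕ | (i = k ∨ r i k) ∧ (k = j ∨ r k j)}.ncard = n →
    eps i - eps j ∈ AddSubmonoid.closure (simpleRoots r) := by
  intro n
  induction n using Nat.strong_induction_on with
  | _ n ih =>
    intro i j hij hcard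
    by_cases hc : ∃ c, r i c ∧ r c j
    · obtain ⟨c, hic, hcj⟩ := hc
      have hsub1 : {k : ℕ | (i = k ∨ r i k) ∧ (k = c ∨ r k c)} ⊂
          {k : ℕ | (i = k ∨ r i k) ∧ (k = j ∨ r k j)} := by
        constructor
        · rintro k ⟨hik, hkc⟩
          refine ⟨hik, Or.inr ?_⟩
          rcases hkc with rfl | hkc
          · exact hcj
          · exact hr.trans _ _ _ hkc hcj
        · intro hsub
          have hj : j ∈ {k : ℕ | (i = k ∨ r i k) ∧ (k = j ∨ r k j)} :=
            ⟨Or.inr hij, Or.inl rfl⟩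
          have hj' := hsub hj
          rcases hj'.2 with rfl | hjc
          · exact hr.irrefl _ hcj
          · exact hr.irrefl _ (hr.trans _ _ _ hjc hcj)
      have hsub2 : {k : ℕ | (c = k ∨ r c k) ∧ (k = j ∨ r k j)} ⊂
          {k : ℕ | (i = k ∨ r i k) ∧ (k = j ∨ r k j)} := by
        constructor
        · rintro k ⟨hck, hkj⟩
          refine ⟨Or.inr ?_, hkj⟩
          rcases hck with rfl | hck
          · exact hic
          · exact hr.trans _ _ _ hic hck
        · intro hsub
          have hi : i ∈ {k : ℕ | (i = k ∨ r i k) ∧ (k = j ∨ r k j)} :=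
            ⟨Or.inl rfl, Or.inr hij⟩
          have hi' := hsub hi
          rcases hi'.1 with rfl | hci
          · exact hr.irrefl _ hic
          · exact hr.irrefl _ (hr.trans _ _ _ hci hic)
      have h1 := Set.ncard_lt_ncard hsub1 (hfin i j hij)
      have h2 := Set.ncard_lt_ncard hsub2 (hfin i j hij)
      rw [hcard] at h1 h2
      have m1 := ih _ h1 i c hic rfl
      have m2 := ih _ h2 c j hcj rfl
      have : eps i - eps j = (eps i - eps c) + (eps c - eps j) := by abel
      rw [this]
      exact AddSubmonoid.add_mem _ m1 m2
    · exact AddSubmonoid.subset_closure ⟨i, j, hij, hc, rfl⟩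

theorem stmt1 (r : ℕ → ℕ → Prop) (hr : IsStrictTotalOrder ℕ r) :
    (∀ i j : ℕ, r i j → eps i - eps j ∈ AddSubmonoid.closure (simpleRoots r)) ↔
    (∀ i j : ℕ, r i j → {k : ℕ | (i = k ∨ r i k) ∧ (k = j ∨ r k j)}.Finite) := by
  constructor
  · intro h i j hij
    obtain ⟨l, hl, hsum⟩ := AddSubmonoid.exists_list_of_mem_closure (h i j hij)
    have hne : i ≠ j := by rintro rfl; exact hr.irrefl _ hij
    exact key_forward r hr l.length l rfl hl i j hne hsum
  · intro hfin i j hij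
    exact key_backward r hr hfin _ i j hij rfl
end

section
/- Let ≺ be a strict total order on ℕ. Then the following are equivalent: (a) for all i ≺ j the closed interval {k ∈ ℕ : i ≼ k ≼ j} is finite; (b) for every ν ∈ (ℕ →₀ ℤ), the set of multisets m of elements of (ℕ →₀ ℤ) such that every element of m is a positive root (i.e., of the form ε_i − ε_j with i ≺ j) and the sum of m equals ν, is finite. (Statement (b) is the finiteness of the Kostant partition function, equivalently the finite-dimensionality of the weight spaces of the enveloping algebra U(n⁻) for a Dynkin Borel subalgebra of sl(∞).) -/
private lemma root_apply {α : Type*} [DecidableEq α] (i j k : α) :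
    (Finsupp.single i (1:ℤ) - Finsupp.single j (1:ℤ)) k
      = (if i = k then 1 else 0) - (if j = k then 1 else 0) := by
  simp [Finsupp.single_apply]

private lemma multiset_finite {β : Type*} {s : Set β} (hs : s.Finite) (N : ℕ) :
    {m : Multiset β | (∀ x ∈ m, x ∈ s) ∧ Multiset.card m ≤ N}.Finite := by
  classical
  induction N with
  | zero =>
    apply Set.Finite.subset (Set.finite_singleton (0 : Multiset β))
    rintro m ⟨-, hc⟩
    simpa using Multiset.card_eq_zero.mp (Nat.le_zero.mp hc)
  | succ N ih =>
    apply Set.Finite.subset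
      (Set.Finite.insert 0 ((hs.prod ih).image (fun p => p.1 ::ₘ p.2)))
    rintro m ⟨hmem, hc⟩
    rcases Multiset.empty_or_exists_mem m with h0 | ⟨a, ha⟩
    · simp [h0]
    · refine Set.mem_insert_iff.2 (Or.inr ⟨(a, m.erase a), ⟨hmem a ha, ?_, ?_⟩, ?_⟩)
      · intro x hx
        exact hmem x (Multiset.mem_of_mem_erase hx)
      · have := Multiset.card_erase_of_mem ha
        simp only [Set.mem_setOf_eq, this]
        have h2 : (Multiset.card m).pred = Multiset.card m - 1 := rfl
        omega
      · simp [Multiset.cons_erase ha]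

private lemma aux {α : Type*} [LinearOrder α]
    (hIcc : ∀ i j : α, i < j → (Set.Icc i j).Finite) (ν : α →₀ ℤ) :
    {m : Multiset (α →₀ ℤ) |
      (∀ x ∈ m, ∃ i j : α, i < j ∧ x = Finsupp.single i 1 - Finsupp.single j 1)
        ∧ m.sum = ν}.Finite := by
  classical
  have hIcc' : ∀ a b : α, (Set.Icc a b).Finite := by
    intro a b
    rcases lt_trichotomy a b with h | h | h
    · exact hIcc a b h
    · subst h; simp [Set.Icc_self]
    · rw [Set.Icc_eq_empty (not_le.2 h)]; exact Set.finite_empty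
  set T : Set α := {k | ∃ a ∈ ν.support, ∃ b ∈ ν.support, a < b ∧ a ≤ k ∧ k ≤ b} with hTdef
  have hT : T.Finite := by
    have hsub : T ⊆ ⋃ a ∈ (ν.support : Set α), ⋃ b ∈ (ν.support : Set α), Set.Icc a b := by
      rintro k ⟨a, ha, b, hb, -, hak, hkb⟩
      simp only [Set.mem_iUnion]
      exact ⟨a, ha, b, hb, hak, hkb⟩
    exact Set.Finite.subset
      (Set.Finite.biUnion ν.support.finite_toSet fun a _ =>
        Set.Finite.biUnion ν.support.finite_toSet fun b _ => hIcc' a b) hsub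
  set h : α → ℤ := fun k => ((hT.toFinset.filter (fun x => x < k)).card : ℤ) with hhdef
  have hmono : ∀ i ∈ hT.toFinset, ∀ j ∈ hT.toFinset, i < j → h i + 1 ≤ h j := by
    intro i hi j hj hij
    have hsub : hT.toFinset.filter (fun x => x < i) ⊆ hT.toFinset.filter (fun x => x < j) := by
      intro x hx
      rw [Finset.mem_filter] at hx ⊢
      exact ⟨hx.1, hx.2.trans hij⟩
    have hss : hT.toFinset.filter (fun x => x < i) ⊂ hT.toFinset.filter (fun x => x < j) := by
      rw [Finset.ssubset_iff_of_subset hsub]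
      exact ⟨i, Finset.mem_filter.2 ⟨hi, hij⟩,
        fun hc => absurd (Finset.mem_filter.1 hc).2 (lt_irrefl i)⟩
    have := Finset.card_lt_card hss
    simp only [hhdef]
    omega
  set φ : (α →₀ ℤ) →+ ℤ :=
    { toFun := fun y => ∑ k ∈ hT.toFinset, h k * y k,
      map_zero' := by simp,
      map_add' := by
        intro y z
        simp [mul_add, Finset.sum_add_distrib] } with hφdef
  have hφroot : ∀ i ∈ hT.toFinset, ∀ j ∈ hT.toFinset,
      φ (Finsupp.single i 1 - Finsupp.single j 1) = h i - h j := by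
    intro i hi j hj
    simp only [hφdef, AddMonoidHom.coe_mk, ZeroHom.coe_mk]
    have : ∀ k ∈ hT.toFinset, h k * ((Finsupp.single i 1 - Finsupp.single j 1 : α →₀ ℤ) k)
        = (if i = k then h k else 0) - (if j = k then h k else 0) := by
      intro k _
      rw [root_apply]
      split_ifs <;> ring
    rw [Finset.sum_congr rfl this, Finset.sum_sub_distrib,
      Finset.sum_ite_eq, Finset.sum_ite_eq, if_pos hi, if_pos hj]
  -- key claim: all roots in such a multiset have both indices in T
  have key : ∀ m : Multiset (α →₀ ℤ),
      (∀ x ∈ m, ∃ i j : α, i < j ∧ x = Finsupp.single i 1 - Finsupp.single j 1) →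
      m.sum = ν → ∀ x ∈ m, ∃ i ∈ hT.toFinset, ∃ j ∈ hT.toFinset,
        i < j ∧ x = Finsupp.single i 1 - Finsupp.single j 1 := by
    intro m hm hsum x hx
    set W : Finset α := Finset.sup m.toFinset Finsupp.support with hWdef
    have hWmem : ∀ (k : α), ∀ y ∈ m, (y : α →₀ ℤ) k ≠ 0 → k ∈ W := by
      intro k y hy hk
      rw [hWdef, Finset.mem_sup]
      exact ⟨y, Multiset.mem_toFinset.2 hy, Finsupp.mem_support_iff.2 hk⟩
    have hWmem' : ∀ k ∈ W, ∃ y ∈ m, (y : α →₀ ℤ) k ≠ 0 := by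
      intro k hk
      rw [hWdef, Finset.mem_sup] at hk
      obtain ⟨y, hy, hky⟩ := hk
      exact ⟨y, Multiset.mem_toFinset.1 hy, Finsupp.mem_support_iff.1 hky⟩
    obtain ⟨i0, j0, hij0, hx0⟩ := hm x hx
    have hends : ∀ y ∈ m, ∀ p q : α, p < q →
        y = Finsupp.single p 1 - Finsupp.single q 1 → p ∈ W ∧ q ∈ W := by
      intro y hy p q hpq hyeq
      refine ⟨hWmem p y hy ?_, hWmem q y hy ?_⟩
      · rw [hyeq, root_apply]
        simp [(ne_of_lt hpq).symm]
      · rw [hyeq, root_apply]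
        simp [ne_of_lt hpq]
    have hWne : W.Nonempty := ⟨i0, (hends x hx i0 j0 hij0 hx0).1⟩
    set a := W.min' hWne with hadef
    set b := W.max' hWne with hbdef
    have hva : ∀ y ∈ m, ∀ p q : α, p < q →
        y = Finsupp.single p 1 - Finsupp.single q 1 →
        (y : α →₀ ℤ) a = if p = a then 1 else 0 := by
      intro y hy p q hpq hyeq
      have hqa : q ≠ a := by
        intro hqa
        have hpW := (hends y hy p q hpq hyeq).1
        have := W.min'_le p hpW
        rw [← hadef] at this
        exact absurd (hqa ▸ hpq) (not_lt.2 this)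
      rw [hyeq, root_apply]
      simp [hqa]
    have hvb : ∀ y ∈ m, ∀ p q : α, p < q →
        y = Finsupp.single p 1 - Finsupp.single q 1 →
        (y : α →₀ ℤ) b = if q = b then -1 else 0 := by
      intro y hy p q hpq hyeq
      have hpb : p ≠ b := by
        intro hpb
        have hqW := (hends y hy p q hpq hyeq).2
        have := W.le_max' q hqW
        rw [← hbdef] at this
        exact absurd (hpb ▸ hpq) (not_lt.2 this)
      rw [hyeq, root_apply]
      simp [hpb]
      split_ifs <;> simp
    have happ : ∀ c : α, ν c = (m.map (fun y => (y : α →₀ ℤ) c)).sum := by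
      intro c
      rw [← hsum]
      have := map_multiset_sum (Finsupp.applyAddHom (M := ℤ) c) m
      simpa using this
    have hνa : 0 < ν a := by
      obtain ⟨y1, hy1, hy1a⟩ := hWmem' a (W.min'_mem hWne)
      obtain ⟨p, q, hpq, hyeq⟩ := hm y1 hy1
      have h1 : (y1 : α →₀ ℤ) a = 1 := by
        rw [hva y1 hy1 p q hpq hyeq] at hy1a ⊢
        split_ifs at hy1a ⊢ with hc
        · rfl
        · exact absurd rfl hy1a
      have hcons := Multiset.cons_erase hy1
      have hrest : 0 ≤ ((m.erase y1).map (fun y => (y : α →₀ ℤ) a)).sum := by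
        apply Multiset.sum_nonneg
        intro z hz
        obtain ⟨y2, hy2, rfl⟩ := Multiset.mem_map.1 hz
        have hy2m : y2 ∈ m := Multiset.mem_of_mem_erase hy2
        obtain ⟨p2, q2, hpq2, hyeq2⟩ := hm y2 hy2m
        rw [hva y2 hy2m p2 q2 hpq2 hyeq2]
        split_ifs <;> norm_num
      have : ν a = (y1 : α →₀ ℤ) a + ((m.erase y1).map (fun y => (y : α →₀ ℤ) a)).sum := by
        rw [happ a]
        conv_lhs => rw [← hcons]
        rw [Multiset.map_cons, Multiset.sum_cons]
      rw [this, h1]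
      linarith
    have hνb : ν b < 0 := by
      obtain ⟨y1, hy1, hy1b⟩ := hWmem' b (W.max'_mem hWne)
      obtain ⟨p, q, hpq, hyeq⟩ := hm y1 hy1
      have h1 : (y1 : α →₀ ℤ) b = -1 := by
        rw [hvb y1 hy1 p q hpq hyeq] at hy1b ⊢
        split_ifs at hy1b ⊢ with hc
        · rfl
        · exact absurd rfl hy1b
      have hcons := Multiset.cons_erase hy1
      have hrest : ((m.erase y1).map (fun y => (y : α →₀ ℤ) b)).sum ≤ 0 := by
        have h0 : (((m.erase y1)).map (fun _ => (0:ℤ))).sum = 0 := by simp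
        rw [← h0]
        apply Multiset.sum_map_le_sum_map
        intro y2 hy2
        have hy2m : y2 ∈ m := Multiset.mem_of_mem_erase hy2
        obtain ⟨p2, q2, hpq2, hyeq2⟩ := hm y2 hy2m
        rw [hvb y2 hy2m p2 q2 hpq2 hyeq2]
        split_ifs <;> norm_num
      have : ν b = (y1 : α →₀ ℤ) b + ((m.erase y1).map (fun y => (y : α →₀ ℤ) b)).sum := by
        rw [happ b]
        conv_lhs => rw [← hcons]
        rw [Multiset.map_cons, Multiset.sum_cons]
      rw [this, h1]
      linarith
    have haS : a ∈ ν.support := Finsupp.mem_support_iff.2 (ne_of_gt hνa)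
    have hbS : b ∈ ν.support := Finsupp.mem_support_iff.2 (ne_of_lt hνb)
    have hne : a ≠ b := by
      intro hab
      rw [hab] at hνa
      linarith
    have hab : a < b := lt_of_le_of_ne (W.min'_le b (W.max'_mem hWne)) hne
    have hWT : ∀ k ∈ W, k ∈ hT.toFinset := by
      intro k hk
      rw [Set.Finite.mem_toFinset, hTdef]
      exact ⟨a, haS, b, hbS, hab, W.min'_le k hk, W.le_max' k hk⟩
    obtain ⟨hiW, hjW⟩ := hends x hx i0 j0 hij0 hx0
    exact ⟨i0, hWT i0 hiW, j0, hWT j0 hjW, hij0, hx0⟩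
  -- conclude
  apply Set.Finite.subset (multiset_finite
    (((hT.prod hT).image (fun p : α × α => Finsupp.single p.1 1 - Finsupp.single p.2 1)))
    (-φ ν).toNat)
  rintro m ⟨hm, hsum⟩
  have hkey := key m hm hsum
  refine ⟨?_, ?_⟩
  · intro x hx
    obtain ⟨i, hi, j, hj, hij, rfl⟩ := hkey x hx
    exact ⟨(i, j), ⟨hT.mem_toFinset.1 hi, hT.mem_toFinset.1 hj⟩, rfl⟩
  · have h1 : φ ν = (m.map (fun y => φ y)).sum := by
      rw [← hsum]
      exact map_multiset_sum φ m
    have h2 : (m.map (fun y => φ y)).sum ≤ (m.map (fun _ => (-1:ℤ))).sum := by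
      apply Multiset.sum_map_le_sum_map
      intro y hy
      obtain ⟨i, hi, j, hj, hij, rfl⟩ := hkey y hy
      rw [hφroot i hi j hj]
      have := hmono i hi j hj hij
      linarith
    have h3 : (m.map (fun _ => (-1:ℤ))).sum = -(Multiset.card m : ℤ) := by
      simp [Multiset.map_const']
    have h4 : (Multiset.card m : ℤ) ≤ -φ ν := by
      rw [h3] at h2
      rw [h1]
      linarith
    omega

theorem stmt4 (r : ℕ → ℕ → Prop) (hr : IsStrictTotalOrder ℕ r) :
    (∀ i j : ℕ, r i j → {k : ℕ | (i = k ∨ r i k) ∧ (k = j ∨ r k j)}.Finite) ↔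
    (∀ ν : ℕ →₀ ℤ,
      {m : Multiset (ℕ →₀ ℤ) |
        (∀ x ∈ m, ∃ i j : ℕ, r i j ∧ x = eps i - eps j) ∧ m.sum = ν}.Finite) := by
  haveI := hr
  constructor
  · intro hfin ν
    letI : DecidableRel r := Classical.decRel r
    exact @aux ℕ (linearOrderOfSTO r) hfin ν
  · intro hb i j hij
    by_contra hinf
    have hij' : i ≠ j := fun e => absurd (e ▸ hij) (irrefl_of r j)
    set ν : ℕ →₀ ℤ := eps i - eps j with hνdef
    have hIinf : ({k : ℕ | (i = k ∨ r i k) ∧ (k = j ∨ r k j)} \ {i, j}).Infinite := by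
      apply Set.Infinite.diff
      · exact hinf
      · exact (Set.finite_singleton j).insert i
    have hprop : ∀ k ∈ ({k : ℕ | (i = k ∨ r i k) ∧ (k = j ∨ r k j)} \ {i, j}),
        r i k ∧ r k j ∧ k ≠ j := by
      rintro k ⟨⟨h1, h2⟩, h3⟩
      simp only [Set.mem_insert_iff, Set.mem_singleton_iff, not_or] at h3
      exact ⟨h1.resolve_left (fun e => h3.1 e.symm), h2.resolve_left h3.2, h3.2⟩
    set f : ℕ → Multiset (ℕ →₀ ℤ) := fun k => {eps i - eps k, eps k - eps j} with hfdef
    have hmaps : ∀ k ∈ ({k : ℕ | (i = k ∨ r i k) ∧ (k = j ∨ r k j)} \ {i, j}),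
        f k ∈ {m : Multiset (ℕ →₀ ℤ) |
          (∀ x ∈ m, ∃ i' j' : ℕ, r i' j' ∧ x = eps i' - eps j') ∧ m.sum = ν} := by
      intro k hk
      obtain ⟨h1, h2, h3⟩ := hprop k hk
      constructor
      · intro z hz
        simp only [hfdef, Multiset.insert_eq_cons, Multiset.mem_cons,
          Multiset.mem_singleton] at hz
        rcases hz with rfl | rfl
        · exact ⟨i, k, h1, rfl⟩
        · exact ⟨k, j, h2, rfl⟩
      · show (f k).sum = ν
        simp only [hfdef, Multiset.insert_eq_cons, Multiset.sum_cons,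
          Multiset.sum_singleton, hνdef]
        abel
    have hinj : Set.InjOn f ({k : ℕ | (i = k ∨ r i k) ∧ (k = j ∨ r k j)} \ {i, j}) := by
      intro k hk k' hk' heq
      have hmem : eps i - eps k ∈ f k' := by
        rw [← heq]
        simp [hfdef]
      simp only [hfdef, Multiset.insert_eq_cons, Multiset.mem_cons,
        Multiset.mem_singleton] at hmem
      rcases hmem with hcase | hcase
      · have : eps k = eps k' := by
          have := sub_right_injective hcase
          exact this
        exact Finsupp.single_left_injective (one_ne_zero) this
      · exfalso
        have hkj : k ≠ j := (hprop k hk).2.2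
        have hkj' : k' ≠ j := (hprop k' hk').2.2
        have := DFunLike.congr_fun hcase j
        simp only [eps] at this
        rw [root_apply, root_apply] at this
        simp [hij', hkj, hkj'] at this
    have hPinf : ({m : Multiset (ℕ →₀ ℤ) |
        (∀ x ∈ m, ∃ i' j' : ℕ, r i' j' ∧ x = eps i' - eps j') ∧ m.sum = ν}).Infinite := by
      exact (Set.Infinite.image hinj hIinf).mono
        (by rintro z ⟨k, hk, rfl⟩; exact hmaps k hk)
    exact hPinf (hb ν)
end
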